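/- Let g be a cusp form of even weight ω for SL₂(ℤ) with Fourier expansion g(y) = Σ_{m≥1} A_m e^{2πimy}, and define f(y) := (1/2)·g(−1/y) + Σ_{m≥1} A_m e₁(−m/y) for y ∈ ℍ with Re(y) ≠ 0, assuming the series Σ_{m≥1} A_m e₁(−m/y) and Σ_{m≥1} A_m e₁(my) converge locally uniformly on ℂ∖i[0,∞). Then the weight −ω cocycle of f for the generator S = (0 −1; 1 0) satisfies, for all y ∈ ℍ with Re(y) ≠ 0, h_S[f](y) := y^ω·f(−1/y) − f(y) = y^ω·Σ_{m≥1} A_m e₁(my) − Σ_{m≥1} A_m e₁(−m/y) (the g-terms cancelling by the modularity g(−1/y) = y^ω g(y)); in particular, h_S[f] extends to a holomorphic function on ℂ∖i[0,∞). -/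

import Mathlib

noncomputable section

open Complex Filter Topology

/-- `e₁(z) = (1/2πi) ∫₀^∞ e^{-2πt}/(t + iz) dt`. -/
def e1 (z : ℂ) : ℂ :=
  1 / (2 * Real.pi * I) *
    ∫ t in Set.Ioi (0 : ℝ), Complex.exp (-2 * Real.pi * t) / ((t : ℂ) + I * z)

/-- `f(y) = (1/2)·g(-1/y) + Σ_{m≥1} A_m e₁(-m/y)`. -/
def modifiedCusp (g : ℂ → ℂ) (A : ℕ → ℂ) (y : ℂ) : ℂ :=
  1 / 2 * g (-1 / y) + ∑' m : ℕ, A (m + 1) * e1 (-((m : ℂ) + 1) / y)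

section AuxLemmas
open MeasureTheory Metric Set

def cutS : Set ℂ := {y : ℂ | ¬(y.re = 0 ∧ 0 ≤ y.im)}

lemma isClosed_cutT : IsClosed {y : ℂ | y.re = 0 ∧ 0 ≤ y.im} :=
  (isClosed_eq continuous_re continuous_const).inter (isClosed_le continuous_const continuous_im)

lemma isOpen_cutS : IsOpen cutS := by
  have : cutS = {y : ℂ | y.re = 0 ∧ 0 ≤ y.im}ᶜ := rfl
  rw [this]; exact isClosed_cutT.isOpen_compl

lemma norm_t_add_I_mul {z : ℂ} {t : ℝ} :
    ‖(t : ℂ) + I * z‖ = ‖z - (t : ℂ) * I‖ := by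
  have : (t : ℂ) + I * z = I * (z - (t : ℂ) * I) := by ring_nf; rw [I_sq]; ring
  rw [this, norm_mul, Complex.norm_I, one_mul]

lemma ne_zero_t_add {z : ℂ} (hz : z ∈ cutS) {t : ℝ} (ht : 0 ≤ t) :
    (t : ℂ) + I * z ≠ 0 := by
  intro h
  apply hz
  have hzt : z = (t : ℂ) * I := by linear_combination (-I) * h + z * I_sq
  refine ⟨by simp [hzt], by simpa [hzt] using ht⟩

set_option maxHeartbeats 1600000 in
lemma e1_differentiableAt {z₀ : ℂ} (hz : z₀ ∈ cutS) : DifferentiableAt ℂ e1 z₀ := by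
  obtain ⟨ε, hε, hball⟩ := Metric.isOpen_iff.mp isOpen_cutS z₀ hz
  set K : Set ℂ := closedBall z₀ (ε / 2) with hK
  have hKS : K ⊆ cutS := fun w hw =>
    hball (mem_ball.mpr (lt_of_le_of_lt (mem_closedBall.mp hw) (by linarith)))
  have hKne : K.Nonempty := ⟨z₀, mem_closedBall_self (by linarith)⟩
  set T : Set ℂ := {y : ℂ | y.re = 0 ∧ 0 ≤ y.im} with hT
  obtain ⟨w, hwK, hwmin⟩ := (isCompact_closedBall z₀ (ε / 2)).exists_isMinOn hKne
    (continuous_infDist_pt T).continuousOn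
  set δ : ℝ := infDist w T with hδdef
  have hTne : T.Nonempty := ⟨0, by simp [hT]⟩
  have hδ : 0 < δ := by
    rw [hδdef]
    exact (isClosed_cutT.notMem_iff_infDist_pos hTne).mp (hKS hwK)
  -- key lower bound
  have key : ∀ z ∈ K, ∀ t : ℝ, 0 ≤ t → δ ≤ ‖(t : ℂ) + I * z‖ := by
    intro z hzK t ht
    rw [norm_t_add_I_mul]
    have h1 : δ ≤ infDist z T := hwmin hzK
    have h2 : infDist z T ≤ dist z ((t : ℂ) * I) :=
      infDist_le_dist_of_mem (by exact ⟨by simp, by simpa using ht⟩)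
    rw [dist_eq_norm] at h2
    linarith
  -- the parametric integral
  set F : ℂ → ℝ → ℂ := fun z t => Complex.exp (-2 * Real.pi * t) / ((t : ℂ) + I * z) with hF
  set F' : ℂ → ℝ → ℂ := fun z t =>
    Complex.exp (-2 * Real.pi * t) * (-I / ((t : ℂ) + I * z) ^ 2) with hF'
  have hexp : ∀ t : ℝ, ‖Complex.exp (-2 * Real.pi * t)‖ = Real.exp (-2 * Real.pi * t) := by
    intro t
    rw [show (-2 * (Real.pi : ℂ) * (t : ℂ)) = ((-2 * Real.pi * t : ℝ) : ℂ) by push_cast; ring,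
      Complex.norm_exp_ofReal]
  have hexpInt : IntegrableOn (fun t : ℝ => Real.exp (-(2 * Real.pi) * t)) (Ioi 0) :=
    exp_neg_integrableOn_Ioi 0 (by positivity)
  have hcontF : ∀ z ∈ cutS, ContinuousOn (F z) (Ioi 0) := by
    intro z hzS
    apply ContinuousOn.div
    · exact (Complex.continuous_exp.comp (by continuity)).continuousOn
    · exact Continuous.continuousOn (by continuity)
    · intro t ht
      exact ne_zero_t_add hzS (le_of_lt ht)
  have hmeasF : ∀ z ∈ cutS, AEStronglyMeasurable (F z) (volume.restrict (Ioi 0)) :=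
    fun z hzS => (hcontF z hzS).aestronglyMeasurable measurableSet_Ioi
  have hcontF' : ∀ z ∈ cutS, ContinuousOn (F' z) (Ioi 0) := by
    intro z hzS
    apply ContinuousOn.mul
    · exact (Complex.continuous_exp.comp (by continuity)).continuousOn
    · apply ContinuousOn.div
      · exact continuousOn_const
      · exact Continuous.continuousOn (by continuity)
      · intro t ht
        exact pow_ne_zero 2 (ne_zero_t_add hzS (le_of_lt ht))
  have hz₀K : z₀ ∈ K := mem_closedBall_self (by linarith)
  have hballK : ball z₀ (ε / 2) ⊆ K := ball_subset_closedBall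
  have hFint : Integrable (F z₀) (volume.restrict (Ioi 0)) := by
    apply Integrable.mono (hexpInt.const_mul δ⁻¹) (hmeasF z₀ hz)
    filter_upwards [ae_restrict_mem measurableSet_Ioi] with t ht
    rw [hF]
    simp only [norm_div, hexp]
    rw [Real.norm_of_nonneg (by positivity : (0:ℝ) ≤ δ⁻¹ * Real.exp (-(2 * Real.pi) * t))]
    have hkey := key z₀ hz₀K t (le_of_lt ht)
    rw [div_le_iff₀ (lt_of_lt_of_le hδ hkey)]
    have : Real.exp (-2 * Real.pi * t) = Real.exp (-(2 * Real.pi) * t) := by ring_nf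
    rw [this]
    calc Real.exp (-(2 * Real.pi) * t) = δ⁻¹ * Real.exp (-(2 * Real.pi) * t) * δ := by
          field_simp
      _ ≤ δ⁻¹ * Real.exp (-(2 * Real.pi) * t) * ‖(t:ℂ) + I * z₀‖ := by
          apply mul_le_mul_of_nonneg_left hkey (by positivity)
  have hbound : ∀ᵐ t ∂(volume.restrict (Ioi 0)), ∀ z ∈ ball z₀ (ε/2),
      ‖F' z t‖ ≤ δ⁻¹ ^ 2 * Real.exp (-(2 * Real.pi) * t) := by
    filter_upwards [ae_restrict_mem measurableSet_Ioi] with t ht z hzb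
    have hkey := key z (hballK hzb) t (le_of_lt ht)
    rw [hF']
    simp only [norm_mul, norm_div, hexp, norm_neg, Complex.norm_I, norm_pow]
    have hpos : 0 < ‖(t:ℂ) + I * z‖ := lt_of_lt_of_le hδ hkey
    have h1 : Real.exp (-2 * Real.pi * t) = Real.exp (-(2 * Real.pi) * t) := by ring_nf
    rw [h1]
    have h3 : ‖(t:ℂ) + I * z‖⁻¹ ≤ δ⁻¹ := inv_anti₀ hδ hkey
    have h2 : (1:ℝ) / ‖(t:ℂ) + I * z‖ ^ 2 ≤ δ⁻¹ ^ 2 := by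
      rw [one_div, ← inv_pow]
      exact pow_le_pow_left₀ (by positivity) h3 2
    nlinarith [Real.exp_pos (-(2 * Real.pi) * t), h2]
  have hdiff : ∀ᵐ t ∂(volume.restrict (Ioi 0)), ∀ z ∈ ball z₀ (ε/2),
      HasDerivAt (fun z => F z t) (F' z t) z := by
    filter_upwards [ae_restrict_mem measurableSet_Ioi] with t ht z hzb
    have hne := ne_zero_t_add (hKS (hballK hzb)) (le_of_lt (show (0:ℝ) < t from ht))
    have h1 : HasDerivAt (fun z : ℂ => (t:ℂ) + I * z) I z := by
      simpa using ((hasDerivAt_id z).const_mul I).const_add (t:ℂ)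
    have h2 : HasDerivAt (fun z : ℂ => ((t:ℂ) + I * z)⁻¹) (-I / ((t:ℂ) + I * z) ^ 2) z :=
      h1.inv hne
    have h3 := h2.const_mul (Complex.exp (-2 * Real.pi * t))
    simpa [hF, hF', div_eq_mul_inv] using h3
  have hF'meas : AEStronglyMeasurable (F' z₀) (volume.restrict (Ioi 0)) :=
    (hcontF' z₀ hz).aestronglyMeasurable measurableSet_Ioi
  have hFmeas : ∀ᶠ z in 𝓝 z₀, AEStronglyMeasurable (F z) (volume.restrict (Ioi 0)) := by
    filter_upwards [isOpen_cutS.mem_nhds hz] with z hzS using hmeasF z hzS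
  obtain ⟨-, hderiv⟩ := hasDerivAt_integral_of_dominated_loc_of_deriv_le
    (ball_mem_nhds z₀ (show (0:ℝ) < ε/2 by linarith)) hFmeas hFint hF'meas hbound
    ((hexpInt.const_mul _)) hdiff
  have he1 : e1 = fun z => 1 / (2 * Real.pi * I) * ∫ t in Ioi (0:ℝ), F z t := rfl
  rw [he1]
  exact (hderiv.differentiableAt).const_mul _

lemma e1_differentiableOn : DifferentiableOn ℂ e1 cutS :=
  fun z hz => (e1_differentiableAt hz).differentiableWithinAt

lemma mem_cutS_iff {y : ℂ} : y ∈ cutS ↔ y.re ≠ 0 ∨ y.im < 0 := by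
  simp only [cutS, Set.mem_setOf_eq, not_and_or, not_le]

lemma cutS_ne_zero {y : ℂ} (hy : y ∈ cutS) : y ≠ 0 := by
  rintro rfl
  exact hy ⟨by simp, by simp⟩

lemma mul_mem_cutS {y : ℂ} (hy : y ∈ cutS) (m : ℕ) : ((m : ℂ) + 1) * y ∈ cutS := by
  rw [mem_cutS_iff] at hy ⊢
  have hc : (0:ℝ) < (m:ℝ) + 1 := by positivity
  have hre : (((m:ℂ) + 1) * y).re = ((m:ℝ) + 1) * y.re := by
    simp [Complex.mul_re]
  have him : (((m:ℂ) + 1) * y).im = ((m:ℝ) + 1) * y.im := by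
    simp [Complex.mul_im]
  rcases hy with h | h
  · left; rw [hre]; exact mul_ne_zero (ne_of_gt hc) h
  · right; rw [him]; exact mul_neg_of_pos_of_neg hc h

lemma neg_div_mem_cutS {y : ℂ} (hy : y ∈ cutS) (m : ℕ) : -((m : ℂ) + 1) / y ∈ cutS := by
  have hy0 : y ≠ 0 := cutS_ne_zero hy
  have hnsq : 0 < Complex.normSq y := Complex.normSq_pos.mpr hy0
  have hc : (0:ℝ) < (m:ℝ) + 1 := by positivity
  have hre : (-((m:ℂ) + 1) / y).re = -(((m:ℝ) + 1) * y.re) / Complex.normSq y := by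
    rw [div_eq_mul_inv]
    simp [Complex.mul_re, Complex.inv_re, Complex.inv_im]
    ring
  have him : (-((m:ℂ) + 1) / y).im = ((m:ℝ) + 1) * y.im / Complex.normSq y := by
    rw [div_eq_mul_inv]
    simp [Complex.mul_im, Complex.inv_re, Complex.inv_im]
    ring
  rw [mem_cutS_iff] at hy ⊢
  rcases hy with h | h
  · left; rw [hre]
    exact div_ne_zero (neg_ne_zero.mpr (mul_ne_zero (ne_of_gt hc) h)) (ne_of_gt hnsq)
  · right; rw [him]
    exact div_neg_of_neg_of_pos (mul_neg_of_pos_of_neg hc h) hnsq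

lemma term1_diff (A : ℕ → ℂ) (m : ℕ) :
    DifferentiableOn ℂ (fun y : ℂ => A (m + 1) * e1 (-((m : ℂ) + 1) / y)) cutS := by
  have hinner : DifferentiableOn ℂ (fun y : ℂ => -((m : ℂ) + 1) / y) cutS :=
    (differentiableOn_const _).div differentiableOn_id fun y hy => cutS_ne_zero hy
  exact (e1_differentiableOn.comp hinner fun y hy => neg_div_mem_cutS hy m).const_mul _

lemma term2_diff (A : ℕ → ℂ) (m : ℕ) :
    DifferentiableOn ℂ (fun y : ℂ => A (m + 1) * e1 (((m : ℂ) + 1) * y)) cutS := by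
  have hinner : DifferentiableOn ℂ (fun y : ℂ => ((m : ℂ) + 1) * y) cutS :=
    (differentiableOn_const _).mul differentiableOn_id
  exact (e1_differentiableOn.comp hinner fun y hy => mul_mem_cutS hy m).const_mul _

end AuxLemmas

/-- The weight `-ω` cocycle of `f` for `S = (0 -1; 1 0)` is
`h_S[f](y) = y^ω f(-1/y) - f(y) = y^ω Σ_m A_m e₁(my) - Σ_m A_m e₁(-m/y)` (the `g`-terms
cancel by modularity), and it extends to a holomorphic function on `ℂ∖i[0,∞)`. -/
theorem stmt17 (ω : ℕ) (hω : Even ω)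
    (g : ℂ → ℂ) (A : ℕ → ℂ)
    (hghol : DifferentiableOn ℂ g {y : ℂ | 0 < y.im})
    (hmod : ∀ a b c d : ℤ, a * d - b * c = 1 → ∀ y : ℂ, 0 < y.im →
      g (((a : ℂ) * y + b) / ((c : ℂ) * y + d)) = ((c : ℂ) * y + d) ^ ω * g y)
    (hfour : ∀ y : ℂ, 0 < y.im →
      g y = ∑' m : ℕ, A (m + 1) * Complex.exp (2 * Real.pi * I * ((m : ℂ) + 1) * y))
    (C : ℝ) (hC : 0 < C) (hA : ∀ m : ℕ, 1 ≤ m → ‖A m‖ ≤ C * (m : ℝ) ^ ω)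
    -- local uniform convergence of both e₁-series on the cut plane ℂ∖i[0,∞)
    (hconv1 : TendstoLocallyUniformlyOn
      (fun (N : ℕ) (y : ℂ) => ∑ m ∈ Finset.range N, A (m + 1) * e1 (-((m : ℂ) + 1) / y))
      (fun y : ℂ => ∑' m : ℕ, A (m + 1) * e1 (-((m : ℂ) + 1) / y))
      atTop {y : ℂ | ¬(y.re = 0 ∧ 0 ≤ y.im)})
    (hconv2 : TendstoLocallyUniformlyOn
      (fun (N : ℕ) (y : ℂ) => ∑ m ∈ Finset.range N, A (m + 1) * e1 (((m : ℂ) + 1) * y))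
      (fun y : ℂ => ∑' m : ℕ, A (m + 1) * e1 (((m : ℂ) + 1) * y))
      atTop {y : ℂ | ¬(y.re = 0 ∧ 0 ≤ y.im)}) :
    -- the cocycle identity on ℍ off the imaginary axis
    (∀ y : ℂ, 0 < y.im → y.re ≠ 0 →
      y ^ ω * modifiedCusp g A (-1 / y) - modifiedCusp g A y
        = y ^ ω * ∑' m : ℕ, A (m + 1) * e1 (((m : ℂ) + 1) * y)
            - ∑' m : ℕ, A (m + 1) * e1 (-((m : ℂ) + 1) / y)) ∧
    -- the right-hand side is holomorphic on ℂ∖i[0,∞)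
    DifferentiableOn ℂ
      (fun y : ℂ => y ^ ω * ∑' m : ℕ, A (m + 1) * e1 (((m : ℂ) + 1) * y)
          - ∑' m : ℕ, A (m + 1) * e1 (-((m : ℂ) + 1) / y))
      {y : ℂ | ¬(y.re = 0 ∧ 0 ≤ y.im)} := by
  constructor
  · intro y hy hre
    have hy0 : y ≠ 0 := by rintro rfl; simp at hy
    have harg1 : (-1 : ℂ) / (-1 / y) = y := by field_simp
    have harg2 : ∀ m : ℕ, -((m : ℂ) + 1) / (-1 / y) = ((m : ℂ) + 1) * y := by
      intro m; field_simp
    have hmod' : g (-1 / y) = y ^ ω * g y := by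
      have h := hmod 0 (-1) 1 0 (by norm_num) y hy
      push_cast at h
      rw [zero_mul, one_mul, zero_add, add_zero] at h
      exact h
    have hts : (∑' m : ℕ, A (m + 1) * e1 (-((m : ℂ) + 1) / (-1 / y)))
        = ∑' m : ℕ, A (m + 1) * e1 (((m : ℂ) + 1) * y) :=
      tsum_congr fun m => by rw [harg2 m]
    simp only [modifiedCusp, harg1, hts, hmod']
    ring
  · have hS1 : DifferentiableOn ℂ
        (fun y : ℂ => ∑' m : ℕ, A (m + 1) * e1 (-((m : ℂ) + 1) / y)) cutS :=
      hconv1.differentiableOn (Filter.Eventually.of_forall fun N =>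
        DifferentiableOn.fun_sum fun m _ => term1_diff A m) isOpen_cutS
    have hS2 : DifferentiableOn ℂ
        (fun y : ℂ => ∑' m : ℕ, A (m + 1) * e1 (((m : ℂ) + 1) * y)) cutS :=
      hconv2.differentiableOn (Filter.Eventually.of_forall fun N =>
        DifferentiableOn.fun_sum fun m _ => term2_diff A m) isOpen_cutS
    exact ((differentiable_pow ω).differentiableOn.mul hS2).sub hS1
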